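/- arXiv:2206.12500 — 6 statements merged into one kernel-verified Lean document; each statement's English description precedes it below -/
import Mathlib

section
/- Given λ > 0 and a finite set P of points moving linearly in the plane, define G_λ(t) as the graph on vertex set P with an edge between p and q iff ‖p(t) - q(t)‖ ≤ λ. Then the minimum bottleneck of a moving spanning tree satisfies b(T*) ≤ λ if and only if the intersection graph G_λ(0) ∩ G_λ(1) (edges present in both graphs) is connected. -/
/-- The bottleneck of a moving spanning tree. -/
noncomputable def bottleneck {V : Type*} (p0 p1 : V → EuclideanSpace ℝ (Fin 2))
    (T : SimpleGraph V) : ℝ :=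
  sSup {d : ℝ | ∃ u v, T.Adj u v ∧ ∃ t ∈ Set.Icc (0:ℝ) 1,
    d = ‖((1 - t) • p0 u + t • p1 u) - ((1 - t) • p0 v + t • p1 v)‖}

/-- The intersection graph `G_λ(0) ∩ G_λ(1)`: two distinct points are adjacent iff
their distance is at most `λ` both at time `0` and at time `1`. -/
def interGraph {V : Type*} (p0 p1 : V → EuclideanSpace ℝ (Fin 2)) (lam : ℝ) :
    SimpleGraph V :=
  SimpleGraph.fromRel (fun u v => ‖p0 u - p0 v‖ ≤ lam ∧ ‖p1 u - p1 v‖ ≤ lam)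

open SimpleGraph in
/-- Every finite connected graph contains a spanning tree. -/
lemma exists_tree_le_aux {V : Type*} [Finite V] {G : SimpleGraph V}
    (hG : G.Connected) : ∃ T ≤ G, T.IsTree := by
  classical
  obtain ⟨T, ⟨hTle, hTconn⟩, hmin⟩ :=
    (wellFounded_lt (α := SimpleGraph V)).has_min
      {H : SimpleGraph V | H ≤ G ∧ H.Connected} ⟨G, le_refl _, hG⟩
  refine ⟨T, hTle, hTconn, ?_⟩
  by_contra hac
  rw [isAcyclic_iff_forall_adj_isBridge] at hac
  push_neg at hac
  obtain ⟨v, w, hadj, hbr⟩ := hac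
  rw [isBridge_iff] at hbr
  push_neg at hbr
  have hreach : (T \ fromEdgeSet {s(v, w)}).Reachable v w := hbr
  set T' : SimpleGraph V := T \ fromEdgeSet {s(v, w)} with hT'
  have key : ∀ {a b : V}, T.Walk a b → T'.Reachable a b := by
    intro a b p
    induction p with
    | nil => exact Reachable.refl _
    | @cons a c b h q ih =>
      refine Reachable.trans ?_ ih
      by_cases he : s(a, c) = s(v, w)
      · rw [Sym2.eq_iff] at he
        rcases he with ⟨rfl, rfl⟩ | ⟨rfl, rfl⟩
        · exact hreach
        · exact hreach.symm
      · refine SimpleGraph.Adj.reachable ?_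
        simp only [hT', sdiff_adj, fromEdgeSet_adj, Set.mem_singleton_iff]
        exact ⟨h, fun hc => he hc.1⟩
  have hT'conn : T'.Connected := by
    haveI := hTconn.nonempty
    exact ⟨fun x y => key (hTconn.preconnected x y).some⟩
  have hT'not : ¬ T'.Adj v w := by
    simp [hT', sdiff_adj, hadj.ne]
  have hT'lt : T' < T := by
    refine lt_of_le_of_ne sdiff_le fun h => hT'not (h ▸ hadj)
  exact hmin T' ⟨le_trans sdiff_le hTle, hT'conn⟩ hT'lt

theorem stmt5 {V : Type*} [Fintype V] [Nonempty V]
    (p0 p1 : V → EuclideanSpace ℝ (Fin 2)) (lam : ℝ) (hlam : 0 < lam)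
    (Tstar : SimpleGraph V) (hTree : Tstar.IsTree)
    (hmin : ∀ T : SimpleGraph V, T.IsTree → bottleneck p0 p1 Tstar ≤ bottleneck p0 p1 T) :
    bottleneck p0 p1 Tstar ≤ lam ↔ (interGraph p0 p1 lam).Connected := by
  classical
  -- the general pointwise bound
  have hpt : ∀ (u v : V) (t : ℝ), t ∈ Set.Icc (0:ℝ) 1 →
      ‖((1 - t) • p0 u + t • p1 u) - ((1 - t) • p0 v + t • p1 v)‖ ≤
        max ‖p0 u - p0 v‖ ‖p1 u - p1 v‖ := by
    intro u v t ht
    have hrw : ((1 - t) • p0 u + t • p1 u) - ((1 - t) • p0 v + t • p1 v)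
        = (1 - t) • (p0 u - p0 v) + t • (p1 u - p1 v) := by
      simp [smul_sub]; abel
    rw [hrw]
    calc ‖(1 - t) • (p0 u - p0 v) + t • (p1 u - p1 v)‖
        ≤ ‖(1 - t) • (p0 u - p0 v)‖ + ‖t • (p1 u - p1 v)‖ := norm_add_le _ _
      _ = (1 - t) * ‖p0 u - p0 v‖ + t * ‖p1 u - p1 v‖ := by
          rw [norm_smul, norm_smul, Real.norm_eq_abs, Real.norm_eq_abs,
            abs_of_nonneg (by linarith [ht.2]), abs_of_nonneg ht.1]
      _ ≤ (1 - t) * max ‖p0 u - p0 v‖ ‖p1 u - p1 v‖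
            + t * max ‖p0 u - p0 v‖ ‖p1 u - p1 v‖ :=
          add_le_add
            (mul_le_mul_of_nonneg_left (le_max_left _ _) (by linarith [ht.2]))
            (mul_le_mul_of_nonneg_left (le_max_right _ _) ht.1)
      _ = max ‖p0 u - p0 v‖ ‖p1 u - p1 v‖ := by ring
  -- boundedness of the bottleneck set
  have hbdd : ∀ T : SimpleGraph V, BddAbove {d : ℝ | ∃ u v, T.Adj u v ∧
      ∃ t ∈ Set.Icc (0:ℝ) 1,
      d = ‖((1 - t) • p0 u + t • p1 u) - ((1 - t) • p0 v + t • p1 v)‖} := by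
    intro T
    refine ⟨(Finset.univ (α := V × V)).sup' (by simp)
      (fun uv => max ‖p0 uv.1 - p0 uv.2‖ ‖p1 uv.1 - p1 uv.2‖), ?_⟩
    rintro d ⟨u, v, _, t, ht, rfl⟩
    exact le_trans (hpt u v t ht)
      (Finset.le_sup' (f := fun uv : V × V =>
        max ‖p0 uv.1 - p0 uv.2‖ ‖p1 uv.1 - p1 uv.2‖) (Finset.mem_univ (u, v)))
  constructor
  · -- forward direction
    intro h
    refine hTree.isConnected.mono ?_
    intro u v huv
    have h0 : ‖p0 u - p0 v‖ ≤ lam := by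
      refine le_trans (le_csSup (hbdd Tstar) ?_) h
      exact ⟨u, v, huv, 0, by norm_num, by norm_num⟩
    have h1 : ‖p1 u - p1 v‖ ≤ lam := by
      refine le_trans (le_csSup (hbdd Tstar) ?_) h
      exact ⟨u, v, huv, 1, by norm_num, by norm_num⟩
    exact ⟨huv.ne, Or.inl ⟨h0, h1⟩⟩
  · -- backward direction
    intro h
    obtain ⟨T, hTle, hT⟩ := exists_tree_le_aux h
    refine le_trans (hmin T hT) (Real.sSup_le ?_ hlam.le)
    rintro d ⟨u, v, huv, t, ht, rfl⟩
    have hadj := hTle huv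
    have hbound : ‖p0 u - p0 v‖ ≤ lam ∧ ‖p1 u - p1 v‖ ≤ lam := by
      rcases hadj.2 with h' | h'
      · exact h'
      · rw [norm_sub_rev (p0 u), norm_sub_rev (p1 u)]
        exact h'
    exact le_trans (hpt u v t ht) (max_le hbound.1 hbound.2)
end

section
/- Let C be an axis-parallel square of side length λ/√2 and let q be a point whose disk A_q of radius λ centered at q intersects the boundary of C in at least one point and does not contain all of C. If moreover q lies strictly above the horizontal line containing the top edge of C (and C is extended downward to be bottom-unbounded), then the intersection of the circle ∂A_q with C consists of a single connected arc. -/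
set_option maxHeartbeats 4000000 in
theorem stmt8 (lam a b : ℝ) (hlam : 0 < lam)
    (q : EuclideanSpace ℝ (Fin 2)) (hq : b < q 1)
    (C : Set (EuclideanSpace ℝ (Fin 2)))
    (hC : C = {x | x 0 ∈ Set.Icc a (a + lam / Real.sqrt 2) ∧ x 1 ≤ b})
    (hinter : (Metric.closedBall q lam ∩ frontier C).Nonempty)
    (hnotall : ¬ C ⊆ Metric.closedBall q lam) :
    IsConnected (Metric.sphere q lam ∩ C) := by
  have hdist : ∀ x y : EuclideanSpace ℝ (Fin 2),
      dist x y = Real.sqrt ((x 0 - y 0)^2 + (x 1 - y 1)^2) := by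
    intro x y
    rw [EuclideanSpace.dist_eq, Fin.sum_univ_two]
    simp [Real.dist_eq, sq_abs]
  set s := lam / Real.sqrt 2 with hs
  -- C is closed
  have hCeq : C = (EuclideanSpace.proj (0:Fin 2) : EuclideanSpace ℝ (Fin 2) →L[ℝ] ℝ) ⁻¹'
      (Set.Icc a (a+s)) ∩
      (EuclideanSpace.proj (1:Fin 2) : EuclideanSpace ℝ (Fin 2) →L[ℝ] ℝ) ⁻¹' (Set.Iic b) := by
    rw [hC]; rfl
  have hCclosed : IsClosed C := by
    rw [hCeq]
    exact (isClosed_Icc.preimage (EuclideanSpace.proj 0).continuous).inter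
      (isClosed_Iic.preimage (EuclideanSpace.proj 1).continuous)
  have hCconv : Convex ℝ C := by
    rw [hC]
    intro x hx y hy α β hα hβ hαβ
    simp only [Set.mem_setOf_eq, Set.mem_Icc] at hx hy ⊢
    have h0 : (α • x + β • y) 0 = α * x 0 + β * y 0 := rfl
    have h1 : (α • x + β • y) 1 = α * x 1 + β * y 1 := rfl
    rw [h0, h1]
    obtain ⟨⟨hxa, hxb⟩, hx1⟩ := hx
    obtain ⟨⟨hya, hyb⟩, hy1⟩ := hy
    have e1 : ∀ u : ℝ, α * u + β * u = u := by
      intro u; rw [← add_mul, hαβ, one_mul]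
    refine ⟨⟨?_, ?_⟩, ?_⟩
    · have h := add_le_add (mul_le_mul_of_nonneg_left hxa hα) (mul_le_mul_of_nonneg_left hya hβ)
      rw [e1] at h; linarith
    · have h := add_le_add (mul_le_mul_of_nonneg_left hxb hα) (mul_le_mul_of_nonneg_left hyb hβ)
      rw [e1] at h; linarith
    · have h := add_le_add (mul_le_mul_of_nonneg_left hx1 hα) (mul_le_mul_of_nonneg_left hy1 hβ)
      rw [e1] at h; linarith
  obtain ⟨p, hpball, hpfr⟩ := hinter
  have hpC : p ∈ C := by
    rw [← hCclosed.closure_eq]; exact frontier_subset_closure hpfr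
  have hp0 : p 0 ∈ Set.Icc a (a + s) := by rw [hC] at hpC; exact hpC.1
  have hp1 : p 1 ≤ b := by rw [hC] at hpC; exact hpC.2
  -- a far away point of C
  set z : EuclideanSpace ℝ (Fin 2) :=
    (EuclideanSpace.equiv (Fin 2) ℝ).symm ![p 0, min b (q 1 - lam - 1)] with hz
  have hz0 : z 0 = p 0 := rfl
  have hz1 : z 1 = min b (q 1 - lam - 1) := rfl
  have hzC : z ∈ C := by
    rw [hC]; exact ⟨by rw [hz0]; exact hp0, by rw [hz1]; exact min_le_left _ _⟩
  have hz1' : q 1 - z 1 ≥ lam + 1 := by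
    rw [hz1]
    have := min_le_right b (q 1 - lam - 1)
    linarith
  have hzdist : lam ≤ dist z q := by
    rw [hdist]
    have h1 : q 1 - z 1 ≤ Real.sqrt ((z 0 - q 0)^2 + (z 1 - q 1)^2) := by
      rw [show (q 1 - z 1) = Real.sqrt ((q 1 - z 1)^2) from
        (Real.sqrt_sq (by linarith)).symm]
      exact Real.sqrt_le_sqrt (by nlinarith)
    linarith
  -- IVT: a point of C on the sphere
  have hivt := hCconv.isPreconnected.intermediate_value hpC hzC
    (Continuous.continuousOn (continuous_id.dist continuous_const) :
      ContinuousOn (fun x => dist x q) C)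
  have hx₀ : ∃ x₀ ∈ C, dist x₀ q = lam := by
    have : lam ∈ Set.Icc (dist p q) (dist z q) :=
      ⟨Metric.mem_closedBall.mp hpball, hzdist⟩
    obtain ⟨x₀, hx₀C, hx₀d⟩ := hivt this
    exact ⟨x₀, hx₀C, hx₀d⟩
  obtain ⟨x₀, hx₀C, hx₀d⟩ := hx₀
  set c := q 1 - b with hc_def
  have hc : 0 < c := by simp [hc_def]; linarith
  have hx₀1 : x₀ 1 ≤ b := by rw [hC] at hx₀C; exact hx₀C.2
  have hx₀sq : (x₀ 0 - q 0)^2 + (x₀ 1 - q 1)^2 = lam^2 := by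
    have h := hx₀d
    rw [hdist] at h
    have hnn : (0:ℝ) ≤ (x₀ 0 - q 0)^2 + (x₀ 1 - q 1)^2 := by positivity
    nlinarith [Real.sq_sqrt hnn]
  have hD : c^2 ≤ lam^2 := by nlinarith
  set T := Real.sqrt (lam^2 - c^2) with hT
  have hT2 : T^2 = lam^2 - c^2 := Real.sq_sqrt (by linarith)
  set f : ℝ → EuclideanSpace ℝ (Fin 2) := fun t =>
    (EuclideanSpace.equiv (Fin 2) ℝ).symm ![q 0 + t, q 1 - Real.sqrt (lam^2 - t^2)] with hf
  have hf0 : ∀ t, f t 0 = q 0 + t := fun t => rfl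
  have hf1 : ∀ t, f t 1 = q 1 - Real.sqrt (lam^2 - t^2) := fun t => rfl
  have hfc : Continuous f := by
    apply (EuclideanSpace.equiv (Fin 2) ℝ).symm.continuous.comp
    apply continuous_pi
    intro i
    fin_cases i
    · exact (continuous_const.add continuous_id)
    · exact continuous_const.sub
        ((continuous_const.sub (continuous_pow 2)).sqrt)
  set l := max (-T) (a - q 0) with hl
  set r := min T (a + s - q 0) with hr
  have key : Metric.sphere q lam ∩ C = f '' Set.Icc l r := by
    ext x
    constructor
    · rintro ⟨hxs, hxC⟩
      rw [hC] at hxC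
      obtain ⟨⟨hxa, hxb⟩, hx1⟩ := hxC
      have hxd : dist x q = lam := Metric.mem_sphere.mp hxs
      set t := x 0 - q 0 with ht
      have hsq : t^2 + (x 1 - q 1)^2 = lam^2 := by
        rw [hdist] at hxd
        have hnn : (0:ℝ) ≤ (x 0 - q 0)^2 + (x 1 - q 1)^2 := by positivity
        rw [ht]
        nlinarith [Real.sq_sqrt hnn, hxd]
      have hy : c ≤ q 1 - x 1 := by simp [hc_def]; linarith
      have hu : lam^2 - t^2 = (q 1 - x 1)^2 := by nlinarith
      have hsqrt : Real.sqrt (lam^2 - t^2) = q 1 - x 1 := by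
        rw [hu]; exact Real.sqrt_sq (by linarith)
      refine ⟨t, ⟨?_, ?_⟩, ?_⟩
      · apply max_le
        · have : |t| ≤ T := by
            rw [← Real.sqrt_sq_eq_abs]
            exact Real.sqrt_le_sqrt (by nlinarith)
          linarith [neg_abs_le t]
        · linarith
      · apply le_min
        · have : |t| ≤ T := by
            rw [← Real.sqrt_sq_eq_abs]
            exact Real.sqrt_le_sqrt (by nlinarith)
          linarith [le_abs_self t]
        · linarith
      · refine PiLp.ext (Fin.forall_fin_two.mpr ⟨?_, ?_⟩)
        · rw [hf0, ht]; ring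
        · rw [hf1, hsqrt]; ring
    · rintro ⟨t, ⟨htl, htr⟩, rfl⟩
      have hmT : -T ≤ t := le_trans (le_max_left _ _) htl
      have hTt : t ≤ T := le_trans htr (min_le_left _ _)
      have habs : t^2 ≤ T^2 := sq_le_sq' hmT hTt
      have hu : c^2 ≤ lam^2 - t^2 := by nlinarith
      have hupos : 0 ≤ lam^2 - t^2 := by nlinarith
      have hsqrtc : c ≤ Real.sqrt (lam^2 - t^2) := (Real.le_sqrt' hc).mpr hu
      constructor
      · rw [Metric.mem_sphere, hdist, hf0, hf1]
        have : (q 0 + t - q 0)^2 + (q 1 - Real.sqrt (lam^2 - t^2) - q 1)^2 = lam^2 := by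
          linear_combination Real.sq_sqrt hupos
        rw [this]
        exact Real.sqrt_sq hlam.le
      · rw [hC]
        refine ⟨⟨?_, ?_⟩, ?_⟩
        · rw [hf0]
          have := le_trans (le_max_right _ _) htl
          linarith
        · rw [hf0]
          have := le_trans htr (min_le_right _ _)
          linarith
        · rw [hf1]
          simp [hc_def] at hsqrtc ⊢
          linarith
  constructor
  · exact ⟨x₀, Metric.mem_sphere.mpr hx₀d, hx₀C⟩
  · rw [key]
    exact isPreconnected_Icc.image f hfc.continuousOn
end

section
/- Let q₁, q₂ be two distinct points in the plane, both strictly above the horizontal line y = b, and consider the lower half-circles γᵢ = { (x,y) : ‖(x,y)-qᵢ‖ = λ, y ≤ (qᵢ)_y } of the circles of equal radius λ centered at them. Then γ₁ and γ₂ intersect in at most one point below the line y = b; equivalently, restricted to { y ≤ b }, the two lower half-circles cross at most once. -/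
lemma distsq_aux (p q : EuclideanSpace ℝ (Fin 2)) (l : ℝ) (h : dist p q = l) :
    (p 0 - q 0)^2 + (p 1 - q 1)^2 = l^2 := by
  rw [EuclideanSpace.dist_eq, Fin.sum_univ_two, Real.dist_eq, Real.dist_eq,
    sq_abs, sq_abs] at h
  rw [← h, Real.sq_sqrt (by positivity)]

theorem stmt10 (lam b : ℝ) (hlam : 0 < lam)
    (q₁ q₂ : EuclideanSpace ℝ (Fin 2)) (hne : q₁ ≠ q₂)
    (h1 : b < q₁ 1) (h2 : b < q₂ 1) :
    Set.Subsingleton {p : EuclideanSpace ℝ (Fin 2) |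
      dist p q₁ = lam ∧ dist p q₂ = lam ∧ p 1 ≤ q₁ 1 ∧ p 1 ≤ q₂ 1 ∧ p 1 ≤ b} := by
  intro p hp p' hp'
  obtain ⟨hpa, hpc, -, -, hpb⟩ := hp
  obtain ⟨hpa', hpc', -, -, hpb'⟩ := hp'
  have e1 := distsq_aux p q₁ lam hpa
  have e2 := distsq_aux p q₂ lam hpc
  have e3 := distsq_aux p' q₁ lam hpa'
  have e4 := distsq_aux p' q₂ lam hpc'
  have hnn : ¬(q₁ 0 = q₂ 0 ∧ q₁ 1 = q₂ 1) := by
    rintro ⟨u, v⟩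
    exact hne (by ext i; fin_cases i <;> assumption)
  by_contra hne'
  have hd : ¬(p 0 = p' 0 ∧ p 1 = p' 1) := by
    rintro ⟨u, v⟩
    exact hne' (by ext i; fin_cases i <;> assumption)
  have hdpos : 0 < (p 0 - p' 0)^2 + (p 1 - p' 1)^2 := by
    rcases not_and_or.mp hd with h | h
    · have := sq_pos_of_ne_zero (sub_ne_zero.mpr h)
      nlinarith [sq_nonneg (p 1 - p' 1)]
    · have := sq_pos_of_ne_zero (sub_ne_zero.mpr h)
      nlinarith [sq_nonneg (p 0 - p' 0)]
  -- difference vector ⟂ center difference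
  have hdn : (p 0 - p' 0)*(q₂ 0 - q₁ 0) + (p 1 - p' 1)*(q₂ 1 - q₁ 1) = 0 := by
    linear_combination (e1 - e2 - e3 + e4)/2
  -- difference vector ⟂ "sum" vector
  have hds : (p 0 - p' 0)*(p 0 + p' 0 - q₁ 0 - q₂ 0)
      + (p 1 - p' 1)*(p 1 + p' 1 - q₁ 1 - q₂ 1) = 0 := by
    linear_combination (e1 + e2 - e3 - e4)/2
  -- "sum" vector ⟂ center difference
  have hsn : (p 0 + p' 0 - q₁ 0 - q₂ 0)*(q₂ 0 - q₁ 0)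
      + (p 1 + p' 1 - q₁ 1 - q₂ 1)*(q₂ 1 - q₁ 1) = 0 := by
    linear_combination (e1 - e2 + e3 - e4)/2
  have hsy : p 1 + p' 1 - q₁ 1 - q₂ 1 = 0 := by
    by_cases hD : (p 0 - p' 0)*(q₂ 1 - q₁ 1) - (p 1 - p' 1)*(q₂ 0 - q₁ 0) = 0
    · exfalso
      have hx : (q₂ 0 - q₁ 0)*((p 0 - p' 0)^2 + (p 1 - p' 1)^2) = 0 := by
        linear_combination (p 0 - p' 0)*hdn - (p 1 - p' 1)*hD
      have hy : (q₂ 1 - q₁ 1)*((p 0 - p' 0)^2 + (p 1 - p' 1)^2) = 0 := by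
        linear_combination (p 1 - p' 1)*hdn + (p 0 - p' 0)*hD
      apply hnn
      constructor
      · have := (mul_eq_zero.mp hx).resolve_right hdpos.ne'
        linarith
      · have := (mul_eq_zero.mp hy).resolve_right hdpos.ne'
        linarith
    · have hkey : (p 1 + p' 1 - q₁ 1 - q₂ 1)
          * ((p 0 - p' 0)*(q₂ 1 - q₁ 1) - (p 1 - p' 1)*(q₂ 0 - q₁ 0)) = 0 := by
        linear_combination (p 0 - p' 0)*hsn - (q₂ 0 - q₁ 0)*hds
      exact (mul_eq_zero.mp hkey).resolve_right hD
  linarith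
end

section
/- Let Q be a finite set of points all strictly above the line y = b, and define for each q ∈ Q the function f_q(x) = q_y - √(λ² - (x - q_x)²) on the domain [q_x - λ, q_x + λ] (the lower half-circle of the radius-λ circle around q). Let U(x) = min over q ∈ Q with x ∈ dom(f_q) of f_q(x) (the lower envelope). Then for a query point p = (p_x, p_y) with p_y ≤ b: there exists q ∈ Q with ‖p - q‖ ≤ λ if and only if some f_q is defined at p_x and p_y ≥ U(p_x). -/
theorem stmt15 (lam b : ℝ) (hlam : 0 < lam)
    (Q : Finset (EuclideanSpace ℝ (Fin 2))) (hQ : Q.Nonempty)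
    (habove : ∀ q ∈ Q, b < q 1)
    (p : EuclideanSpace ℝ (Fin 2)) (hp : p 1 ≤ b) :
    (∃ q ∈ Q, dist p q ≤ lam) ↔
      ((∃ q ∈ Q, |p 0 - q 0| ≤ lam) ∧
        sInf {y : ℝ | ∃ q ∈ Q, |p 0 - q 0| ≤ lam ∧
          y = q 1 - Real.sqrt (lam ^ 2 - (p 0 - q 0) ^ 2)} ≤ p 1) := by
  set S : Set ℝ := {y : ℝ | ∃ q ∈ Q, |p 0 - q 0| ≤ lam ∧
      y = q 1 - Real.sqrt (lam ^ 2 - (p 0 - q 0) ^ 2)} with hS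
  have hSfin : S.Finite := by
    apply Set.Finite.subset (Q.finite_toSet.image
      (fun q => q 1 - Real.sqrt (lam ^ 2 - (p 0 - q 0) ^ 2)))
    rintro y ⟨q, hq, _, rfl⟩
    exact ⟨q, hq, rfl⟩
  -- key equivalence for each q ∈ Q
  have key : ∀ q ∈ Q, (dist p q ≤ lam ↔
      |p 0 - q 0| ≤ lam ∧ q 1 - Real.sqrt (lam ^ 2 - (p 0 - q 0) ^ 2) ≤ p 1) := by
    intro q hq
    have hd : dist p q = Real.sqrt ((p 0 - q 0) ^ 2 + (p 1 - q 1) ^ 2) := by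
      rw [EuclideanSpace.dist_eq]
      congr 1
      rw [Fin.sum_univ_two]
      simp [Real.dist_eq, sq_abs]
    have hqb : p 1 < q 1 := lt_of_le_of_lt hp (habove q hq)
    constructor
    · intro h
      have h2 : (p 0 - q 0) ^ 2 + (p 1 - q 1) ^ 2 ≤ lam ^ 2 := by
        have := Real.sqrt_le_sqrt (by positivity : (0:ℝ) ≤ lam ^ 2) -- dummy
        nlinarith [Real.sq_sqrt (by positivity : (0:ℝ) ≤ (p 0 - q 0) ^ 2 + (p 1 - q 1) ^ 2),
          hd ▸ h, dist_nonneg (x := p) (y := q), hd,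
          Real.sqrt_nonneg ((p 0 - q 0) ^ 2 + (p 1 - q 1) ^ 2)]
      constructor
      · rw [abs_le]; constructor <;> nlinarith [sq_nonneg (p 1 - q 1)]
      · have h3 : (q 1 - p 1) ^ 2 ≤ lam ^ 2 - (p 0 - q 0) ^ 2 := by nlinarith
        have h4 : q 1 - p 1 ≤ Real.sqrt (lam ^ 2 - (p 0 - q 0) ^ 2) := by
          have := Real.sqrt_le_sqrt h3
          rwa [Real.sqrt_sq (by linarith : (0:ℝ) ≤ q 1 - p 1)] at this
        linarith
    · rintro ⟨h1, h2⟩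
      have hnn : (0:ℝ) ≤ lam ^ 2 - (p 0 - q 0) ^ 2 := by
        have := sq_abs (p 0 - q 0)
        nlinarith [abs_nonneg (p 0 - q 0)]
      have h4 : q 1 - p 1 ≤ Real.sqrt (lam ^ 2 - (p 0 - q 0) ^ 2) := by linarith
      have h5 : (q 1 - p 1) ^ 2 ≤ lam ^ 2 - (p 0 - q 0) ^ 2 := by
        nlinarith [Real.sq_sqrt hnn, Real.sqrt_nonneg (lam ^ 2 - (p 0 - q 0) ^ 2)]
      rw [hd]
      rw [show lam = Real.sqrt (lam ^ 2) from (Real.sqrt_sq hlam.le).symm]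
      apply Real.sqrt_le_sqrt
      nlinarith
  constructor
  · rintro ⟨q, hq, hdq⟩
    obtain ⟨h1, h2⟩ := (key q hq).mp hdq
    refine ⟨⟨q, hq, h1⟩, ?_⟩
    have hmem : q 1 - Real.sqrt (lam ^ 2 - (p 0 - q 0) ^ 2) ∈ S := ⟨q, hq, h1, rfl⟩
    exact le_trans (csInf_le hSfin.bddBelow hmem) h2
  · rintro ⟨⟨q0, hq0, h1⟩, h2⟩
    have hSne : S.Nonempty := ⟨_, q0, hq0, h1, rfl⟩
    obtain ⟨q, hq, hql, hqe⟩ := hSne.csInf_mem hSfin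
    exact ⟨q, hq, (key q hq).mpr ⟨hql, by rw [← hqe]; exact h2⟩⟩
end

section
/- Let f, g : ℝ → ℝ be defined by f(x) = c₁ - √(λ² - (x - a₁)²) on [a₁ - λ, a₁ + λ] and g(x) = c₂ - √(λ² - (x - a₂)²) on [a₂ - λ, a₂ + λ], with (a₁, c₁) ≠ (a₂, c₂). Then the equation f(x) = g(x) has at most two solutions in the common domain, and if c₁, c₂ > b and we restrict to x with f(x) ≤ b, it has at most one solution. -/
lemma quad2 (A B C : ℝ) (hA : A ≠ 0) :
    ∃ r s : ℝ, ∀ x : ℝ, A * x ^ 2 + B * x + C = 0 → x = r ∨ x = s := by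
  by_cases hdisc : 0 ≤ discrim A B C
  · refine ⟨(-B + Real.sqrt (discrim A B C)) / (2 * A),
      (-B - Real.sqrt (discrim A B C)) / (2 * A), fun x hx => ?_⟩
    have hs : discrim A B C = Real.sqrt (discrim A B C) * Real.sqrt (discrim A B C) :=
      (Real.mul_self_sqrt hdisc).symm
    have hx' : A * (x * x) + B * x + C = 0 := by linear_combination hx
    exact (quadratic_eq_zero_iff hA hs x).mp hx'
  · refine ⟨0, 0, fun x hx => ?_⟩
    have hx' : A * (x * x) + B * x + C = 0 := by linear_combination hx
    refine absurd hx' (quadratic_ne_zero_of_discrim_ne_sq ?_ x)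
    intro t h
    exact hdisc (h ▸ sq_nonneg t)

theorem stmt16 (lam b a₁ c₁ a₂ c₂ : ℝ) (hlam : 0 < lam)
    (hne : (a₁, c₁) ≠ (a₂, c₂)) (h1 : b < c₁) (h2 : b < c₂) :
    Set.ncard {x : ℝ | x ∈ Set.Icc (a₁ - lam) (a₁ + lam) ∧ x ∈ Set.Icc (a₂ - lam) (a₂ + lam) ∧
      c₁ - Real.sqrt (lam ^ 2 - (x - a₁) ^ 2) = c₂ - Real.sqrt (lam ^ 2 - (x - a₂) ^ 2)} ≤ 2 ∧
    Set.Subsingleton {x : ℝ | x ∈ Set.Icc (a₁ - lam) (a₁ + lam) ∧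
      x ∈ Set.Icc (a₂ - lam) (a₂ + lam) ∧
      c₁ - Real.sqrt (lam ^ 2 - (x - a₁) ^ 2) = c₂ - Real.sqrt (lam ^ 2 - (x - a₂) ^ 2) ∧
      c₁ - Real.sqrt (lam ^ 2 - (x - a₁) ^ 2) ≤ b} := by
  have hne' : a₁ - a₂ ≠ 0 ∨ c₁ - c₂ ≠ 0 := by
    by_contra h
    push_neg at h
    apply hne
    have h1' : a₁ = a₂ := by linarith [h.1]
    have h2' : c₁ = c₂ := by linarith [h.2]
    rw [h1', h2']
  -- basic extraction
  have extract : ∀ x : ℝ, x ∈ Set.Icc (a₁ - lam) (a₁ + lam) →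
      x ∈ Set.Icc (a₂ - lam) (a₂ + lam) →
      c₁ - Real.sqrt (lam ^ 2 - (x - a₁) ^ 2) = c₂ - Real.sqrt (lam ^ 2 - (x - a₂) ^ 2) →
      ∃ u v : ℝ, u = Real.sqrt (lam ^ 2 - (x - a₁) ^ 2) ∧ 0 ≤ u ∧ 0 ≤ v ∧
        u ^ 2 = lam ^ 2 - (x - a₁) ^ 2 ∧ v ^ 2 = lam ^ 2 - (x - a₂) ^ 2 ∧
        u - v = c₁ - c₂ ∧
        (c₁ - c₂) * (u + v) = (a₁ - a₂) * (2 * x - a₁ - a₂) := by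
    intro x hx1 hx2 heq
    obtain ⟨hl1, hr1⟩ := hx1
    obtain ⟨hl2, hr2⟩ := hx2
    have hnn1 : (0:ℝ) ≤ lam ^ 2 - (x - a₁) ^ 2 := by nlinarith
    have hnn2 : (0:ℝ) ≤ lam ^ 2 - (x - a₂) ^ 2 := by nlinarith
    set u := Real.sqrt (lam ^ 2 - (x - a₁) ^ 2) with hu_def
    set v := Real.sqrt (lam ^ 2 - (x - a₂) ^ 2) with hv_def
    have hu2 : u ^ 2 = lam ^ 2 - (x - a₁) ^ 2 := Real.sq_sqrt hnn1
    have hv2 : v ^ 2 = lam ^ 2 - (x - a₂) ^ 2 := Real.sq_sqrt hnn2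
    have huv : u - v = c₁ - c₂ := by linarith
    refine ⟨u, v, rfl, Real.sqrt_nonneg _, Real.sqrt_nonneg _, hu2, hv2, huv, ?_⟩
    linear_combination hu2 - hv2 - (u + v) * huv
  constructor
  · -- at most two solutions
    have key : ∃ r s : ℝ,
        {x : ℝ | x ∈ Set.Icc (a₁ - lam) (a₁ + lam) ∧ x ∈ Set.Icc (a₂ - lam) (a₂ + lam) ∧
          c₁ - Real.sqrt (lam ^ 2 - (x - a₁) ^ 2) = c₂ - Real.sqrt (lam ^ 2 - (x - a₂) ^ 2)}
        ⊆ {r, s} := by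
      by_cases hd : c₁ - c₂ = 0
      · have he : a₁ - a₂ ≠ 0 := by rcases hne' with h | h; exact h; exact absurd hd h
        refine ⟨(a₁ + a₂) / 2, (a₁ + a₂) / 2, fun x hx => ?_⟩
        obtain ⟨hx1, hx2, heq⟩ := hx
        obtain ⟨u, v, _, hu0, hv0, hu2, hv2, huv, hlin⟩ := extract x hx1 hx2 heq
        have hz : (a₁ - a₂) * (2 * x - a₁ - a₂) = 0 := by rw [← hlin, hd]; ring
        have hx0 : 2 * x - a₁ - a₂ = 0 := by
          rcases mul_eq_zero.mp hz with h | h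
          · exact absurd h he
          · exact h
        simp only [Set.mem_insert_iff, Set.mem_singleton_iff]
        left; linarith
      · by_cases he : a₁ - a₂ = 0
        · refine ⟨a₁ - lam, a₁ + lam, fun x hx => ?_⟩
          obtain ⟨hx1, hx2, heq⟩ := hx
          obtain ⟨u, v, _, hu0, hv0, hu2, hv2, huv, hlin⟩ := extract x hx1 hx2 heq
          have hsum : u + v = 0 := by
            have hz : (c₁ - c₂) * (u + v) = 0 := by rw [hlin, he]; ring
            rcases mul_eq_zero.mp hz with h | h
            · exact absurd h hd
            · exact h
          have hu : u = 0 := by linarith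
          have hxsq : (x - (a₁ - lam)) * (x - (a₁ + lam)) = 0 := by
            have : (0:ℝ) ^ 2 = lam ^ 2 - (x - a₁) ^ 2 := hu ▸ hu2
            nlinarith [this]
          simp only [Set.mem_insert_iff, Set.mem_singleton_iff]
          rcases mul_eq_zero.mp hxsq with h | h
          · left; linarith
          · right; linarith
        · -- general case: quadratic in x
          obtain ⟨r, s, hrs⟩ := quad2 (4 * (a₁ - a₂) ^ 2 + 4 * (c₁ - c₂) ^ 2)
            (4 * (a₁ - a₂) * ((c₁ - c₂) ^ 2 - (a₁ - a₂) * (a₁ + a₂)) - 8 * (c₁ - c₂) ^ 2 * a₁)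
            (((c₁ - c₂) ^ 2 - (a₁ - a₂) * (a₁ + a₂)) ^ 2 + 4 * (c₁ - c₂) ^ 2 * a₁ ^ 2
              - 4 * (c₁ - c₂) ^ 2 * lam ^ 2)
            (by positivity)
          refine ⟨r, s, fun x hx => ?_⟩
          obtain ⟨hx1, hx2, heq⟩ := hx
          obtain ⟨u, v, _, hu0, hv0, hu2, hv2, huv, hlin⟩ := extract x hx1 hx2 heq
          apply hrs
          have h2du : 2 * (c₁ - c₂) * u
              = (c₁ - c₂) ^ 2 + (a₁ - a₂) * (2 * x - a₁ - a₂) := by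
            linear_combination hlin + (c₁ - c₂) * huv
          linear_combination (-(2 * (c₁ - c₂) * u) - ((c₁ - c₂) ^ 2
            + (a₁ - a₂) * (2 * x - a₁ - a₂))) * h2du + 4 * (c₁ - c₂) ^ 2 * hu2
    obtain ⟨r, s, hsub⟩ := key
    calc Set.ncard _ ≤ Set.ncard ({r, s} : Set ℝ) :=
          Set.ncard_le_ncard hsub (Set.toFinite _)
      _ ≤ 2 := by
          have := Set.ncard_insert_le r ({s} : Set ℝ)
          simpa [Set.ncard_singleton] using this
  · -- subsingleton part
    intro x hx x' hx'
    by_contra hxx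
    obtain ⟨hx1, hx2, heq, hb⟩ := hx
    obtain ⟨hx1', hx2', heq', hb'⟩ := hx'
    obtain ⟨u, v, hud, hu0, hv0, hu2, hv2, huv, hlin⟩ := extract x hx1 hx2 heq
    obtain ⟨u', v', hud', hu0', hv0', hu2', hv2', huv', hlin'⟩ := extract x' hx1' hx2' heq'
    rw [← hud] at hb
    rw [← hud'] at hb'
    have hupos : 0 < u := by linarith
    have hvpos : 0 < v := by linarith
    have hupos' : 0 < u' := by linarith
    have hvpos' : 0 < v' := by linarith
    by_cases he : a₁ - a₂ = 0
    · have hd : c₁ - c₂ ≠ 0 := by rcases hne' with h | h; exact absurd he h; exact h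
      have hz : (c₁ - c₂) * (u + v) = 0 := by rw [hlin, he]; ring
      rcases mul_eq_zero.mp hz with h | h
      · exact hd h
      · linarith
    · by_cases hd : c₁ - c₂ = 0
      · have hz1 : (a₁ - a₂) * (2 * x - a₁ - a₂) = 0 := by rw [← hlin, hd]; ring
        have hz2 : (a₁ - a₂) * (2 * x' - a₁ - a₂) = 0 := by rw [← hlin', hd]; ring
        have e1 : 2 * x - a₁ - a₂ = 0 := by
          rcases mul_eq_zero.mp hz1 with h | h; exact absurd h he; exact h
        have e2 : 2 * x' - a₁ - a₂ = 0 := by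
          rcases mul_eq_zero.mp hz2 with h | h; exact absurd h he; exact h
        exact hxx (by linarith)
      · have hs : (c₁ - c₂) * (u - u') = (a₁ - a₂) * (x - x') := by
          linear_combination (hlin - hlin') / 2 + (c₁ - c₂) / 2 * (huv - huv')
        have hsv : (c₁ - c₂) * (v - v') = (a₁ - a₂) * (x - x') := by
          linear_combination (hlin - hlin') / 2 - (c₁ - c₂) / 2 * (huv - huv')
        have hE1 : (x - x') * ((a₁ - a₂) * (u + u') + (c₁ - c₂) * (x + x' - 2 * a₁)) = 0 := by
          linear_combination (c₁ - c₂) * hu2 - (c₁ - c₂) * hu2' - (u + u') * hs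
        have hE2 : (x - x') * ((a₁ - a₂) * (v + v') + (c₁ - c₂) * (x + x' - 2 * a₂)) = 0 := by
          linear_combination (c₁ - c₂) * hv2 - (c₁ - c₂) * hv2' - (v + v') * hsv
        have hx0 : x - x' ≠ 0 := fun h => hxx (by linarith [sub_eq_zero.mp h])
        have E1 : (a₁ - a₂) * (u + u') + (c₁ - c₂) * (x + x' - 2 * a₁) = 0 :=
          (mul_eq_zero.mp hE1).resolve_left hx0
        have E2 : (a₁ - a₂) * (v + v') + (c₁ - c₂) * (x + x' - 2 * a₂) = 0 :=
          (mul_eq_zero.mp hE2).resolve_left hx0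
        have hA : (c₁ - c₂) * (u + v + u' + v') = 2 * (a₁ - a₂) * (x + x' - a₁ - a₂) := by
          linear_combination hlin + hlin'
        have hB : (a₁ - a₂) * (u + v + u' + v')
            = -2 * (c₁ - c₂) * (x + x' - a₁ - a₂) := by
          linear_combination E1 + E2
        have hMz : (2 * (a₁ - a₂) ^ 2 + 2 * (c₁ - c₂) ^ 2) * (x + x' - a₁ - a₂) = 0 := by
          linear_combination (c₁ - c₂) * hB - (a₁ - a₂) * hA
        have hM : x + x' - a₁ - a₂ = 0 := by
          rcases mul_eq_zero.mp hMz with h | h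
          · exfalso
            have hpos : (0:ℝ) < 2 * (a₁ - a₂) ^ 2 + 2 * (c₁ - c₂) ^ 2 := by positivity
            linarith
          · exact h
        have hz : (a₁ - a₂) * (u + v + u' + v') = 0 := by
          linear_combination hB - 2 * (c₁ - c₂) * hM
        rcases mul_eq_zero.mp hz with h | h
        · exact he h
        · linarith
end

section
/- Let S₀ and S₁ be finite nonempty sets of positive reals, and suppose a monotone predicate D on ℝ (i.e., D(λ) and λ ≤ λ' implies D(λ')) satisfies: the minimum value λ* with D(λ*) lies in S₀ ∪ S₁. Suppose we have intervals (a₀, b₀] and (a₁, b₁] with λ* ∈ (aᵢ, bᵢ], aᵢ, bᵢ ∈ Sᵢ ∪ {0}, and (aᵢ, bᵢ) ∩ Sᵢ = ∅ for i = 0, 1. Then λ* = min(b₀, b₁). -/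
theorem stmt19 (S₀ S₁ : Set ℝ) (hS₀f : S₀.Finite) (hS₁f : S₁.Finite)
    (hS₀n : S₀.Nonempty) (hS₁n : S₁.Nonempty)
    (hpos₀ : ∀ x ∈ S₀, 0 < x) (hpos₁ : ∀ x ∈ S₁, 0 < x)
    (D : ℝ → Prop) (hmono : ∀ x y : ℝ, D x → x ≤ y → D y)
    (lamstar : ℝ) (hleast : IsLeast {x ∈ S₀ ∪ S₁ | D x} lamstar)
    (a₀ b₀ a₁ b₁ : ℝ)
    (h₀ : lamstar ∈ Set.Ioc a₀ b₀) (h₁ : lamstar ∈ Set.Ioc a₁ b₁)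
    (ha₀ : a₀ ∈ S₀ ∪ {0}) (hb₀ : b₀ ∈ S₀ ∪ {0})
    (ha₁ : a₁ ∈ S₁ ∪ {0}) (hb₁ : b₁ ∈ S₁ ∪ {0})
    (he₀ : Set.Ioo a₀ b₀ ∩ S₀ = ∅) (he₁ : Set.Ioo a₁ b₁ ∩ S₁ = ∅) :
    lamstar = min b₀ b₁ := by
  rcases hleast.1.1 with hmem | hmem
  · have heq : lamstar = b₀ := by
      rcases lt_or_eq_of_le h₀.2 with h | h
      · have : lamstar ∈ Set.Ioo a₀ b₀ ∩ S₀ := ⟨⟨h₀.1, h⟩, hmem⟩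
        rw [he₀] at this; exact this.elim
      · exact h
    rw [heq, min_eq_left (heq ▸ h₁.2)]
  · have heq : lamstar = b₁ := by
      rcases lt_or_eq_of_le h₁.2 with h | h
      · have : lamstar ∈ Set.Ioo a₁ b₁ ∩ S₁ := ⟨⟨h₁.1, h⟩, hmem⟩
        rw [he₁] at this; exact this.elim
      · exact h
    rw [heq, min_eq_right (heq ▸ h₀.2)]
end
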